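/- Let q ≥ 1 be an integer, h > 0, and let P(x) = Σ_{l=0}^{q} a_l x^l be a real polynomial of degree ≤ q. Set w_i = i! · a_i · h^i for i = 1, …, q. Then the Jiang–Shu smoothness indicator of P satisfies the exact bilinear-form identity I[P] = Σ_{i=1}^{q} Σ_{j=1}^{q} C_{i,j} w_i w_j, where C is the symmetric q×q matrix whose entries, for 1 ≤ i ≤ j ≤ q, are C_{i,j} = Σ_{m=1}^{i} 2^{2m−i−j} / ((i−m)! (j−m)! (i+j−2m+1)) if i+j is even, and C_{i,j} = 0 if i+j is odd. -/

import Mathlib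

open Finset Polynomial

/-- Cell average of `u` over the cell `Ω_j = [(j-1/2)h, (j+1/2)h]`. -/
noncomputable def cellAvg (h : ℝ) (j : ℤ) (u : ℝ → ℝ) : ℝ :=
  (1 / h) * ∫ x in (((j : ℝ) - 1/2) * h)..(((j : ℝ) + 1/2) * h), u x

/-- Jiang–Shu smoothness indicator on `Ω_0 = [-h/2, h/2]` for a polynomial of degree ≤ q. -/
noncomputable def JS (q : ℕ) (h : ℝ) (P : Polynomial ℝ) : ℝ :=
  ∑ l ∈ Finset.Icc 1 q, h ^ (2 * l - 1) *
    ∫ x in (-h/2)..(h/2), (Polynomial.eval x ((⇑Polynomial.derivative)^[l] P)) ^ 2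

/-- The symmetric matrix representing the Jiang–Shu indicator as a bilinear form:
for `1 ≤ i ≤ j`, `C i j = ∑_{m=1}^{i} 2^(2m-i-j)/((i-m)!(j-m)!(i+j-2m+1))` if `i+j` is even,
and `0` if `i+j` is odd (extended symmetrically via `min i j`). -/
noncomputable def Cmat (i j : ℕ) : ℝ :=
  if (i + j) % 2 = 0 then
    ∑ m ∈ Finset.Icc 1 (min i j),
      (2 : ℝ) ^ (2 * (m : ℤ) - i - j) /
        ((Nat.factorial (i - m)) * (Nat.factorial (j - m)) * ((i + j - 2 * m + 1 : ℕ) : ℝ))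
  else 0




private noncomputable def Jp (h : ℝ) (k : ℕ) : ℝ :=
  ((h / 2) ^ (k + 1) - (-h / 2) ^ (k + 1)) / ((k : ℝ) + 1)

private noncomputable def cf (P : Polynomial ℝ) (l n : ℕ) : ℝ :=
  (((n + l).descFactorial l : ℕ) : ℝ) * P.coeff (n + l)

private noncomputable def Tm (P : Polynomial ℝ) (h : ℝ) (l i j : ℕ) : ℝ :=
  if l ≤ i ∧ l ≤ j then
    h ^ (2 * l - 1) * ((i.descFactorial l : ℝ) * P.coeff i) *
      ((j.descFactorial l : ℝ) * P.coeff j) * Jp h (i + j - 2 * l)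
  else 0

private lemma sum_shift (l q : ℕ) (hl : 1 ≤ l) (F : ℕ → ℝ) (hF : ∀ i, q < i → F i = 0) :
    ∑ n ∈ Finset.range (q + 1), F (n + l)
      = ∑ i ∈ Finset.Icc 1 q, if l ≤ i then F i else 0 := by
  have h2 : (∑ i ∈ Finset.Icc 1 q, if l ≤ i then F i else 0)
      = ∑ i ∈ Finset.Icc l q, F i := by
    rw [← Finset.sum_filter]
    congr 1
    ext i
    simp only [Finset.mem_filter, Finset.mem_Icc]
    omega
  have h1 : ∑ n ∈ Finset.range (q + 1), F (n + l)
      = ∑ n ∈ Finset.range (q + 1 - l), F (n + l) := by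
    refine (Finset.sum_subset (Finset.range_subset_range.2 (by omega)) ?_).symm
    intro n hn hn'
    simp only [Finset.mem_range] at hn hn'
    exact hF _ (by omega)
  rw [h1, h2]
  refine Finset.sum_nbij' (fun n => n + l) (fun i => i - l) ?_ ?_ ?_ ?_ (fun a _ => rfl) <;>
    · intro a ha
      simp only [Finset.mem_range, Finset.mem_Icc] at *
      omega

private lemma integral_sq_sum (h : ℝ) (N : ℕ) (c : ℕ → ℝ) :
    (∫ x in (-h/2)..(h/2), (∑ n ∈ Finset.range N, c n * x ^ n) ^ 2)
      = ∑ n ∈ Finset.range N, ∑ m ∈ Finset.range N, c n * c m * Jp h (n + m) := by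
  have hpt : ∀ x : ℝ, (∑ n ∈ Finset.range N, c n * x ^ n) ^ 2
      = ∑ n ∈ Finset.range N, ∑ m ∈ Finset.range N, (c n * c m) * x ^ (n + m) := by
    intro x
    rw [sq, Finset.sum_mul_sum]
    exact Finset.sum_congr rfl fun n _ => Finset.sum_congr rfl fun m _ => by
      rw [pow_add]; ring
  simp only [hpt]
  rw [intervalIntegral.integral_finset_sum]
  · refine Finset.sum_congr rfl fun n _ => ?_
    rw [intervalIntegral.integral_finset_sum]
    · refine Finset.sum_congr rfl fun m _ => ?_
      rw [intervalIntegral.integral_const_mul, integral_pow, Jp]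
    · exact fun m _ => ((continuous_const.mul (continuous_pow _)).intervalIntegrable _ _)
  · exact fun n _ =>
      ((continuous_finset_sum _ fun m _ =>
        continuous_const.mul (continuous_pow _)).intervalIntegrable _ _)

private lemma key (h : ℝ) (i j : ℕ) (hi : 1 ≤ i) (hj : 1 ≤ j) (ai aj : ℝ) :
    ∑ l ∈ Finset.Icc 1 (min i j),
      h ^ (2 * l - 1) * ((i.descFactorial l : ℝ) * ai) * ((j.descFactorial l : ℝ) * aj) *
        Jp h (i + j - 2 * l)
      = Cmat i j * ((i.factorial : ℝ) * ai * h ^ i) * ((j.factorial : ℝ) * aj * h ^ j) := by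
  rcases Nat.even_or_odd (i + j) with hpar | hpar
  · have hmod : (i + j) % 2 = 0 := Nat.even_iff.1 hpar
    rw [Cmat, if_pos hmod, Finset.sum_mul, Finset.sum_mul]
    refine Finset.sum_congr rfl fun l hl => ?_
    simp only [Finset.mem_Icc] at hl
    obtain ⟨hl1, hl2⟩ := hl
    obtain ⟨u, hu⟩ : ∃ u, i = u + l := ⟨i - l, by omega⟩
    obtain ⟨v, hv⟩ : ∃ v, j = v + l := ⟨j - l, by omega⟩
    subst hu hv
    obtain ⟨t, ht⟩ : ∃ t, l = t + 1 := ⟨l - 1, by omega⟩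
    subst ht
    have heven : (u + v) % 2 = 0 := by omega
    have d1 : (u.factorial : ℝ) * ((u + (t + 1)).descFactorial (t + 1) : ℝ)
        = ((u + (t + 1)).factorial : ℝ) := by
      have := Nat.factorial_mul_descFactorial (show t + 1 ≤ u + (t + 1) by omega)
      rw [Nat.add_sub_cancel] at this
      exact_mod_cast congrArg (Nat.cast : ℕ → ℝ) this
    have d2 : (v.factorial : ℝ) * ((v + (t + 1)).descFactorial (t + 1) : ℝ)
        = ((v + (t + 1)).factorial : ℝ) := by
      have := Nat.factorial_mul_descFactorial (show t + 1 ≤ v + (t + 1) by omega)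
      rw [Nat.add_sub_cancel] at this
      exact_mod_cast congrArg (Nat.cast : ℕ → ℝ) this
    have z : (2:ℝ) ^ (2 * ((t + 1 : ℕ) : ℤ) - ((u + (t + 1) : ℕ) : ℤ) - ((v + (t + 1) : ℕ) : ℤ))
        = ((2:ℝ) ^ (u + v))⁻¹ := by
      rw [show 2 * ((t + 1 : ℕ) : ℤ) - ((u + (t + 1) : ℕ) : ℤ) - ((v + (t + 1) : ℕ) : ℤ)
          = -((u + v : ℕ) : ℤ) from by push_cast; ring]
      rw [zpow_neg, zpow_natCast]
    rw [show u + (t + 1) + (v + (t + 1)) - 2 * (t + 1) = u + v from by omega,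
        show u + (t + 1) - (t + 1) = u from by omega,
        show v + (t + 1) - (t + 1) = v from by omega,
        show 2 * (t + 1) - 1 = 2 * t + 1 from by omega]
    rw [Jp, z, ← d1, ← d2]
    have hodd : (-h / 2 : ℝ) ^ (u + v + 1) = -((h / 2) ^ (u + v + 1)) := by
      rw [neg_div]
      exact Odd.neg_pow (Nat.odd_iff.2 (by omega)) _
    rw [hodd, div_pow]
    have h2 : (2:ℝ) ^ (u + v) ≠ 0 := by positivity
    have h3 : ((u + v : ℕ) : ℝ) + 1 ≠ 0 := by positivity
    have h4 : ((u + v + 1 : ℕ) : ℝ) ≠ 0 := by positivity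
    have h5 : (u.factorial : ℝ) ≠ 0 := Nat.cast_ne_zero.2 (Nat.factorial_ne_zero u)
    have h6 : (v.factorial : ℝ) ≠ 0 := Nat.cast_ne_zero.2 (Nat.factorial_ne_zero v)
    field_simp
    push_cast
    ring
  · rw [Cmat, if_neg (by rw [Nat.odd_iff] at hpar; omega)]
    rw [zero_mul, zero_mul]
    refine Finset.sum_eq_zero fun l hl => ?_
    simp only [Finset.mem_Icc] at hl
    have heq : (-h / 2 : ℝ) ^ (i + j - 2 * l + 1) = (h / 2) ^ (i + j - 2 * l + 1) := by
      rw [neg_div]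
      refine Even.neg_pow ?_ _
      rw [Nat.odd_iff] at hpar
      refine Nat.even_iff.2 ?_
      omega
    rw [Jp, heq, sub_self, zero_div, mul_zero]

theorem jiang_shu_bilinear_form (q : ℕ) (hq : 1 ≤ q) (h : ℝ) (hh : 0 < h)
    (P : Polynomial ℝ) (hP : P.natDegree ≤ q) (w : ℕ → ℝ)
    (hw : ∀ i, w i = (Nat.factorial i : ℝ) * P.coeff i * h ^ i) :
    JS q h P = ∑ i ∈ Finset.Icc 1 q, ∑ j ∈ Finset.Icc 1 q, Cmat i j * w i * w j := by
  have hcoeff : ∀ i, q < i → P.coeff i = 0 := fun i hi =>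
    Polynomial.coeff_eq_zero_of_natDegree_lt (lt_of_le_of_lt hP hi)
  have heval : ∀ (l : ℕ) (x : ℝ), Polynomial.eval x ((⇑Polynomial.derivative)^[l] P)
      = ∑ n ∈ Finset.range (q + 1), cf P l n * x ^ n := by
    intro l x
    have hd : ((⇑Polynomial.derivative)^[l] P).natDegree < q + 1 :=
      Nat.lt_succ_of_le (le_trans (Polynomial.natDegree_iterate_derivative P l)
        (le_trans (Nat.sub_le _ _) hP))
    rw [Polynomial.eval_eq_sum_range' hd]
    refine Finset.sum_congr rfl fun n _ => ?_
    rw [Polynomial.coeff_iterate_derivative, cf, nsmul_eq_mul]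
  -- Step 1: JS as triple sum of Tm
  have step1 : JS q h P = ∑ l ∈ Finset.Icc 1 q, ∑ i ∈ Finset.Icc 1 q,
      ∑ j ∈ Finset.Icc 1 q, Tm P h l i j := by
    rw [JS]
    refine Finset.sum_congr rfl fun l hl => ?_
    simp only [Finset.mem_Icc] at hl
    obtain ⟨hl1, hl2⟩ := hl
    simp only [heval l]
    rw [integral_sq_sum]
    -- outer shift
    have e1 : (∑ n ∈ Finset.range (q + 1), ∑ m ∈ Finset.range (q + 1),
          cf P l n * cf P l m * Jp h (n + m))
        = ∑ i ∈ Finset.Icc 1 q, if l ≤ i then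
            ((i.descFactorial l : ℝ) * P.coeff i) *
              ∑ m ∈ Finset.range (q + 1), cf P l m * Jp h (i - l + m) else 0 := by
      rw [← sum_shift l q hl1
        (fun i => ((i.descFactorial l : ℝ) * P.coeff i) *
          ∑ m ∈ Finset.range (q + 1), cf P l m * Jp h (i - l + m))
        (fun i hi => by simp [hcoeff i hi])]
      refine Finset.sum_congr rfl fun n _ => ?_
      rw [show n + l - l = n from by omega, Finset.mul_sum]
      exact Finset.sum_congr rfl fun m _ => by rw [cf]; ring
    rw [e1, Finset.mul_sum]
    refine Finset.sum_congr rfl fun i hi => ?_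
    by_cases hli : l ≤ i
    · rw [if_pos hli]
      have e2 : (∑ m ∈ Finset.range (q + 1), cf P l m * Jp h (i - l + m))
          = ∑ j ∈ Finset.Icc 1 q, if l ≤ j then
              ((j.descFactorial l : ℝ) * P.coeff j) * Jp h (i - l + (j - l)) else 0 := by
        rw [← sum_shift l q hl1
          (fun j => ((j.descFactorial l : ℝ) * P.coeff j) * Jp h (i - l + (j - l)))
          (fun j hj => by simp [hcoeff j hj])]
        refine Finset.sum_congr rfl fun m _ => ?_
        rw [show m + l - l = m from by omega, cf]
      rw [e2, Finset.mul_sum, Finset.mul_sum]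
      refine Finset.sum_congr rfl fun j _ => ?_
      by_cases hlj : l ≤ j
      · rw [if_pos hlj, Tm, if_pos ⟨hli, hlj⟩,
          show i - l + (j - l) = i + j - 2 * l from by omega]
        ring
      · rw [if_neg hlj, Tm, if_neg (by tauto), mul_zero, mul_zero]
    · rw [if_neg hli, mul_zero]
      exact (Finset.sum_eq_zero fun j _ => by rw [Tm, if_neg (by tauto)]).symm
  rw [step1]
  rw [Finset.sum_comm]
  refine Finset.sum_congr rfl fun i hi => ?_
  rw [Finset.sum_comm]
  refine Finset.sum_congr rfl fun j hj => ?_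
  simp only [Finset.mem_Icc] at hi hj
  have hfilter : (Finset.Icc 1 q).filter (fun l => l ≤ i ∧ l ≤ j)
      = Finset.Icc 1 (min i j) := by
    ext l
    simp only [Finset.mem_filter, Finset.mem_Icc, le_min_iff]
    omega
  calc ∑ l ∈ Finset.Icc 1 q, Tm P h l i j
      = ∑ l ∈ Finset.Icc 1 (min i j),
          h ^ (2 * l - 1) * ((i.descFactorial l : ℝ) * P.coeff i) *
            ((j.descFactorial l : ℝ) * P.coeff j) * Jp h (i + j - 2 * l) := by
        rw [← hfilter, Finset.sum_filter]
        exact Finset.sum_congr rfl fun l _ => rfl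
    _ = Cmat i j * w i * w j := by
        rw [hw, hw]
        exact key h i j hi.1 hj.1 _ _
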